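/- Let G = (V,E) be a graph with V = {v_1,…,v_n}, and let H be the graph with vertex set V_H = {v_i^1, v_i^2, w_i^1, w_i^2, z_i : i ∈ [n]} and edge set E_H = {w_i^1 v_j^1, w_i^2 v_j^2 : v_j ∈ N_G[v_i]} ∪ {v_i^1 v_j^1, v_i^2 v_j^2, z_i z_j : 1 ≤ i < j ≤ n} ∪ {v_i^1 z_j, v_i^2 z_j : i ∈ [n], j ∈ [n]}. If D_sp is any semipaired dominating set of H, then G has a dominating set of cardinality at most |D_sp|/2. Consequently, γ(G) ≤ γ_pr2(H)/2, and combined with the reverse inequality, γ_pr2(H) = 2·γ(G). -/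

import Mathlib

/-- `D` is a dominating set of `G`. -/
def IsDomSet {V : Type*} (G : SimpleGraph V) (D : Finset V) : Prop :=
  ∀ v, v ∉ D → ∃ u ∈ D, G.Adj u v

/-- `D` is a semipaired dominating set of `G`: a dominating set that can be partitioned
into 2-element subsets (given by a fixed-point-free involution on `D`) such that the two
vertices in each pair are at distance at most 2 (adjacent or having a common neighbor). -/
def IsSemiPD {V : Type*} (G : SimpleGraph V) (D : Finset V) : Prop :=
  IsDomSet G D ∧ ∃ f : V → V, ∀ v ∈ D, f v ∈ D ∧ f v ≠ v ∧ f (f v) = v ∧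
    (G.Adj v (f v) ∨ ∃ w, G.Adj v w ∧ G.Adj (f v) w)

/-- The domination number `γ(G)`. -/
noncomputable def gamma {V : Type*} (G : SimpleGraph V) : ℕ :=
  sInf {k | ∃ D : Finset V, IsDomSet G D ∧ D.card = k}

/-- The semipaired domination number `γ_pr2(G)`. -/
noncomputable def gammaPr2 {V : Type*} (G : SimpleGraph V) : ℕ :=
  sInf {k | ∃ D : Finset V, IsSemiPD G D ∧ D.card = k}

/-- Vertices of the graph `H` constructed from a graph `G` with `n` vertices:
`V_H = {v_i^1, v_i^2, w_i^1, w_i^2, z_i : i ∈ [n]}`. -/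
inductive WV (n : ℕ) where
  | v1 : Fin n → WV n
  | v2 : Fin n → WV n
  | w1 : Fin n → WV n
  | w2 : Fin n → WV n
  | z : Fin n → WV n
deriving DecidableEq

/-- The defining relation of `H`:
`E_H = {w_i^1 v_j^1, w_i^2 v_j^2 : v_j ∈ N_G[v_i]} ∪
{v_i^1 v_j^1, v_i^2 v_j^2, z_i z_j : i < j} ∪ {v_i^1 z_j, v_i^2 z_j : i, j ∈ [n]}`. -/
def wRel {n : ℕ} (G : SimpleGraph (Fin n)) : WV n → WV n → Prop
  | .w1 i, .v1 j => i = j ∨ G.Adj i j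
  | .w2 i, .v2 j => i = j ∨ G.Adj i j
  | .v1 i, .v1 j => i ≠ j
  | .v2 i, .v2 j => i ≠ j
  | .z i, .z j => i ≠ j
  | .v1 _, .z _ => True
  | .v2 _, .z _ => True
  | _, _ => False

/-- The graph `H` constructed from `G`. -/
def bigW {n : ℕ} (G : SimpleGraph (Fin n)) : SimpleGraph (WV n) :=
  SimpleGraph.fromRel (wRel G)

-- aux
def WV.idx {n : ℕ} : WV n → Fin n
  | .v1 i => i | .v2 i => i | .w1 i => i | .w2 i => i | .z i => i

def WV.isS1 {n : ℕ} : WV n → Bool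
  | .v1 _ => true | .w1 _ => true | _ => false

def WV.isS2 {n : ℕ} : WV n → Bool
  | .v2 _ => true | .w2 _ => true | _ => false

lemma dom_side1 {n : ℕ} (G : SimpleGraph (Fin n)) (Dsp : Finset (WV n))
    (hdom : IsDomSet (bigW G) Dsp) :
    IsDomSet G ((Dsp.filter (fun x => WV.isS1 x = true)).image WV.idx) := by
  intro v hv
  have hm1 : ∀ x, x ∈ Dsp → WV.isS1 x = true →
      WV.idx x ∈ (Dsp.filter (fun x => WV.isS1 x = true)).image WV.idx := by
    intro x hx hs
    exact Finset.mem_image_of_mem _ (Finset.mem_filter.mpr ⟨hx, hs⟩)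
  by_cases hw : WV.w1 v ∈ Dsp
  · exact absurd (hm1 _ hw rfl) hv
  · obtain ⟨u, hu, hadj⟩ := hdom _ hw
    rw [bigW, SimpleGraph.fromRel_adj] at hadj
    obtain ⟨hne, h | h⟩ := hadj
    · cases u <;> simp [wRel] at h
    · cases u with
      | v1 j =>
        rcases h with rfl | hadj
        · exact absurd (hm1 _ hu rfl) hv
        · exact ⟨j, hm1 _ hu rfl, hadj.symm⟩
      | v2 j => simp [wRel] at h
      | w1 j => simp [wRel] at h
      | w2 j => simp [wRel] at h
      | z j => simp [wRel] at h

lemma dom_side2 {n : ℕ} (G : SimpleGraph (Fin n)) (Dsp : Finset (WV n))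
    (hdom : IsDomSet (bigW G) Dsp) :
    IsDomSet G ((Dsp.filter (fun x => WV.isS2 x = true)).image WV.idx) := by
  intro v hv
  have hm1 : ∀ x, x ∈ Dsp → WV.isS2 x = true →
      WV.idx x ∈ (Dsp.filter (fun x => WV.isS2 x = true)).image WV.idx := by
    intro x hx hs
    exact Finset.mem_image_of_mem _ (Finset.mem_filter.mpr ⟨hx, hs⟩)
  by_cases hw : WV.w2 v ∈ Dsp
  · exact absurd (hm1 _ hw rfl) hv
  · obtain ⟨u, hu, hadj⟩ := hdom _ hw
    rw [bigW, SimpleGraph.fromRel_adj] at hadj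
    obtain ⟨hne, h | h⟩ := hadj
    · cases u <;> simp [wRel] at h
    · cases u with
      | v2 j =>
        rcases h with rfl | hadj
        · exact absurd (hm1 _ hu rfl) hv
        · exact ⟨j, hm1 _ hu rfl, hadj.symm⟩
      | v1 j => simp [wRel] at h
      | w1 j => simp [wRel] at h
      | w2 j => simp [wRel] at h
      | z j => simp [wRel] at h

lemma key_part1 {n : ℕ} (G : SimpleGraph (Fin n)) (Dsp : Finset (WV n))
    (hdom : IsDomSet (bigW G) Dsp) :
    ∃ D : Finset (Fin n), IsDomSet G D ∧ 2 * D.card ≤ Dsp.card := by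
  classical
  set F1 := Dsp.filter (fun x => WV.isS1 x = true) with hF1
  set F2 := Dsp.filter (fun x => WV.isS2 x = true) with hF2
  set D1 := F1.image WV.idx with hD1
  set D2 := F2.image WV.idx with hD2
  have hc1 : D1.card ≤ F1.card := Finset.card_image_le
  have hc2 : D2.card ≤ F2.card := Finset.card_image_le
  have hsub : F2 ⊆ Dsp.filter (fun x => ¬ (WV.isS1 x = true)) := by
    intro x hx
    rw [hF2, Finset.mem_filter] at hx
    refine Finset.mem_filter.mpr ⟨hx.1, ?_⟩
    cases x <;> simp [WV.isS1, WV.isS2] at hx ⊢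
  have hsum : F1.card + F2.card ≤ Dsp.card := by
    calc F1.card + F2.card ≤ F1.card + (Dsp.filter (fun x => ¬ (WV.isS1 x = true))).card :=
          Nat.add_le_add_left (Finset.card_le_card hsub) _
      _ = Dsp.card := Finset.card_filter_add_card_filter_not _
  rcases le_total D1.card D2.card with hle | hle
  · exact ⟨D1, dom_side1 G Dsp hdom, by omega⟩
  · exact ⟨D2, dom_side2 G Dsp hdom, by omega⟩

def pairf {n : ℕ} : WV n → WV n
  | .v1 i => .v2 i
  | .v2 i => .v1 i
  | x => x

lemma semiPD_of_dom {n : ℕ} (G : SimpleGraph (Fin n)) (D : Finset (Fin n))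
    (hD : IsDomSet G D) :
    IsSemiPD (bigW G) (D.image WV.v1 ∪ D.image WV.v2) ∧
    (D.image WV.v1 ∪ D.image WV.v2).card = 2 * D.card := by
  classical
  set S := D.image WV.v1 ∪ D.image WV.v2 with hS
  have hmem1 : ∀ i, i ∈ D → WV.v1 i ∈ S := fun i hi =>
    Finset.mem_union_left _ (Finset.mem_image_of_mem _ hi)
  have hmem2 : ∀ i, i ∈ D → WV.v2 i ∈ S := fun i hi =>
    Finset.mem_union_right _ (Finset.mem_image_of_mem _ hi)
  have hget : ∀ j : Fin n, ∃ i ∈ D, i = j ∨ G.Adj i j := by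
    intro j
    by_cases hj : j ∈ D
    · exact ⟨j, hj, Or.inl rfl⟩
    · obtain ⟨i, hi, ha⟩ := hD j hj
      exact ⟨i, hi, Or.inr ha⟩
  have hadj : ∀ a b : WV n, a ≠ b → wRel G a b → (bigW G).Adj a b := by
    intro a b hne h
    rw [bigW, SimpleGraph.fromRel_adj]
    exact ⟨hne, Or.inl h⟩
  constructor
  · constructor
    · -- dominating
      intro x hx
      cases x with
      | v1 j =>
        have hj : j ∉ D := fun hj => hx (hmem1 j hj)
        obtain ⟨i, hi, ha⟩ := hD j hj
        refine ⟨WV.v1 i, hmem1 i hi, hadj _ _ ?_ ?_⟩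
        · simp [G.ne_of_adj ha]
        · exact G.ne_of_adj ha
      | v2 j =>
        have hj : j ∉ D := fun hj => hx (hmem2 j hj)
        obtain ⟨i, hi, ha⟩ := hD j hj
        refine ⟨WV.v2 i, hmem2 i hi, hadj _ _ ?_ ?_⟩
        · simp [G.ne_of_adj ha]
        · exact G.ne_of_adj ha
      | w1 j =>
        obtain ⟨i, hi, ha⟩ := hget j
        refine ⟨WV.v1 i, hmem1 i hi, ?_⟩
        rw [bigW, SimpleGraph.fromRel_adj]
        refine ⟨by simp, Or.inr ?_⟩
        rcases ha with rfl | ha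
        · exact Or.inl rfl
        · exact Or.inr ha.symm
      | w2 j =>
        obtain ⟨i, hi, ha⟩ := hget j
        refine ⟨WV.v2 i, hmem2 i hi, ?_⟩
        rw [bigW, SimpleGraph.fromRel_adj]
        refine ⟨by simp, Or.inr ?_⟩
        rcases ha with rfl | ha
        · exact Or.inl rfl
        · exact Or.inr ha.symm
      | z j =>
        obtain ⟨i, hi, _⟩ := hget j
        refine ⟨WV.v1 i, hmem1 i hi, hadj _ _ (by simp) trivial⟩
    · -- pairing
      refine ⟨pairf, ?_⟩
      intro v hv
      rw [hS, Finset.mem_union, Finset.mem_image, Finset.mem_image] at hv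
      rcases hv with ⟨i, hi, rfl⟩ | ⟨i, hi, rfl⟩
      · refine ⟨hmem2 i hi, by simp [pairf], rfl, Or.inr ⟨WV.z i, ?_, ?_⟩⟩
        · exact hadj _ _ (by simp) trivial
        · exact hadj _ _ (by simp [pairf]) trivial
      · refine ⟨hmem1 i hi, by simp [pairf], rfl, Or.inr ⟨WV.z i, ?_, ?_⟩⟩
        · exact hadj _ _ (by simp) trivial
        · exact hadj _ _ (by simp [pairf]) trivial
  · -- cardinality
    have hdisj : Disjoint (D.image WV.v1) (D.image WV.v2) := by
      rw [Finset.disjoint_left]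
      rintro a ha hb
      rw [Finset.mem_image] at ha hb
      obtain ⟨i, _, rfl⟩ := ha
      obtain ⟨i', _, h⟩ := hb
      cases h
    have hinj1 : Function.Injective (WV.v1 (n := n)) := fun a b h => by
      injection h
    have hinj2 : Function.Injective (WV.v2 (n := n)) := fun a b h => by
      injection h
    rw [hS, Finset.card_union_of_disjoint hdisj,
      Finset.card_image_of_injective _ hinj1, Finset.card_image_of_injective _ hinj2]
    omega


/-- Let `H` be the graph constructed from `G` in the approximation-hardness reduction.
If `D_sp` is any semipaired dominating set of `H`, then `G` has a dominating set of
cardinality at most `|D_sp| / 2`. Consequently `γ(G) ≤ γ_pr2(H) / 2`, and combined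
with the reverse inequality, `γ_pr2(H) = 2·γ(G)`. -/
theorem domSet_of_semiPD_bigW {n : ℕ} (G : SimpleGraph (Fin n)) :
    (∀ Dsp : Finset (WV n), IsSemiPD (bigW G) Dsp →
      ∃ D : Finset (Fin n), IsDomSet G D ∧ 2 * D.card ≤ Dsp.card) ∧
    2 * gamma G ≤ gammaPr2 (bigW G) ∧
    gammaPr2 (bigW G) = 2 * gamma G := by
  have part1 : ∀ Dsp : Finset (WV n), IsSemiPD (bigW G) Dsp →
      ∃ D : Finset (Fin n), IsDomSet G D ∧ 2 * D.card ≤ Dsp.card :=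
    fun Dsp h => key_part1 G Dsp h.1
  -- γ(G) is attained
  have hγne : {k | ∃ D : Finset (Fin n), IsDomSet G D ∧ D.card = k}.Nonempty :=
    ⟨Finset.univ.card, Finset.univ, fun v hv => absurd (Finset.mem_univ v) hv, rfl⟩
  obtain ⟨D0, hD0, hD0c⟩ := Nat.sInf_mem hγne
  -- a semi-PD set of H of size 2γ(G)
  obtain ⟨hsemi, hcard⟩ := semiPD_of_dom G D0 hD0
  have hub : gammaPr2 (bigW G) ≤ 2 * gamma G := by
    have := Nat.sInf_le (s := {k | ∃ D : Finset (WV n), IsSemiPD (bigW G) D ∧ D.card = k})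
      ⟨_, hsemi, rfl⟩
    rw [hcard, hD0c] at this
    exact this
  have hprne : {k | ∃ D : Finset (WV n), IsSemiPD (bigW G) D ∧ D.card = k}.Nonempty :=
    ⟨_, _, hsemi, rfl⟩
  obtain ⟨Dsp, hDsp, hDspc⟩ := Nat.sInf_mem hprne
  obtain ⟨D1, hD1, hD1c⟩ := part1 Dsp hDsp
  have hlb : 2 * gamma G ≤ gammaPr2 (bigW G) := by
    have h1 : gamma G ≤ D1.card := Nat.sInf_le ⟨D1, hD1, rfl⟩
    have : gammaPr2 (bigW G) = Dsp.card := hDspc.symm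
    omega
  exact ⟨part1, hlb, le_antisymm hub hlb⟩
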